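/- Let E be a real Banach space and let K be a subset of E that is compact and metrizable in the weak topology of E. Let f : K → ℝ ∪ {+∞} be proper and lower semicontinuous with respect to the weak topology on K. Then the set N(f) = {x* ∈ E* : the function x ↦ f(x) − x*(x) does not attain a strict minimum on K} is meagre (of the first Baire category) in the dual Banach space E*. -/

import Mathlib

set_option linter.unusedSectionVars false
open Filter Topology Set

section Stmt5Aux

variable {E : Type*} [NormedAddCommGroup E] [NormedSpace ℝ E] [CompleteSpace E]
variable {K : Set (WeakSpace ℝ E)}

noncomputable def res (g : E →L[ℝ] ℝ) (p : K) : ℝ := g (p : WeakSpace ℝ E)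

lemma res_cont (g : E →L[ℝ] ℝ) : Continuous (res (K := K) g) := by
  have h : Continuous fun x : WeakSpace ℝ E => g x :=
    WeakBilin.eval_continuous ((topDualPairing ℝ E).flip) g
  exact h.comp continuous_subtype_val

lemma res_add (g x : E →L[ℝ] ℝ) (t : ℝ) (p : K) :
    res (g + t • x) p = res g p + t * res x p := rfl

lemma bound (hcomp : IsCompact K) :
    ∃ R : ℝ, 0 ≤ R ∧ ∀ (g : E →L[ℝ] ℝ) (p : K), |res g p| ≤ R * ‖g‖ := by
  by_cases hne : Nonempty K
  · haveI : CompactSpace K := isCompact_iff_compactSpace.mp hcomp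
    set T : K → (E →L[ℝ] ℝ) →L[ℝ] ℝ :=
      fun p => NormedSpace.inclusionInDoubleDual ℝ E ((toWeakSpace ℝ E).symm (p : WeakSpace ℝ E))
      with hT
    have hpt : ∀ g : E →L[ℝ] ℝ, ∃ C, ∀ p : K, ‖T p g‖ ≤ C := by
      intro g
      have hc : IsCompact (Set.range (res (K := K) g)) := isCompact_range (res_cont g)
      obtain ⟨C, hC⟩ := hc.isBounded.exists_norm_le
      exact ⟨C, fun p => hC _ (Set.mem_range_self p)⟩
    obtain ⟨C', hC'⟩ := banach_steinhaus hpt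
    have hC0 : 0 ≤ C' := le_trans (norm_nonneg _) (hC' (Classical.arbitrary K))
    refine ⟨C', hC0, fun g p => ?_⟩
    calc |res g p| = ‖T p g‖ := rfl
      _ ≤ ‖T p‖ * ‖g‖ := (T p).le_opNorm g
      _ ≤ C' * ‖g‖ := by gcongr; exact hC' p
  · exact ⟨0, le_refl _, fun g p => absurd ⟨p⟩ hne⟩

noncomputable def hh (f : K → EReal) (g : E →L[ℝ] ℝ) (p : K) : EReal :=
  f p - ((res g p : ℝ) : EReal)

def IsMinPt (f : K → EReal) (g : E →L[ℝ] ℝ) (p : K) : Prop :=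
  ∀ q : K, hh f g p ≤ hh f g q

lemma hh_ne_bot {f : K → EReal} (hreal : ∀ p, f p ≠ ⊥) (g : E →L[ℝ] ℝ) (p : K) :
    hh f g p ≠ ⊥ := by
  rw [hh, sub_eq_add_neg, ← EReal.coe_neg]
  simp [EReal.add_eq_bot_iff, hreal p]

lemma hh_real {f : K → EReal} {p : K} {a : ℝ} (ha : f p = (a : EReal)) (g : E →L[ℝ] ℝ) :
    hh f g p = ((a - res g p : ℝ) : EReal) := by
  rw [hh, ha, EReal.coe_sub]

lemma hh_lt_top {f : K → EReal} {p : K} (h : f p ≠ ⊤) (g : E →L[ℝ] ℝ) :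
    hh f g p < ⊤ := by
  rw [hh, sub_eq_add_neg, ← EReal.coe_neg]
  exact EReal.add_lt_top h (EReal.coe_ne_top _)

lemma hh_lsc {f : K → EReal} (hreal : ∀ p, f p ≠ ⊥) (hlsc : LowerSemicontinuous f)
    (g : E →L[ℝ] ℝ) : LowerSemicontinuous (hh f g) := by
  intro p y hy
  rcases eq_or_ne y ⊥ with rfl | hybot
  · filter_upwards with q
    exact bot_lt_iff_ne_bot.mpr (hh_ne_bot hreal g q)
  have hytop : y ≠ ⊤ := (hy.trans_le le_top).ne
  lift y to ℝ using ⟨hytop, hybot⟩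
  have h1 : (↑(y + res g p) : EReal) < f p := by
    rw [EReal.coe_add]
    exact (EReal.lt_sub_iff_add_lt (Or.inr (EReal.coe_ne_top _))
      (Or.inr (EReal.coe_ne_bot _))).mp hy
  obtain ⟨b, hb1, hb2⟩ := EReal.lt_iff_exists_real_btwn.mp h1
  have hb1' : y + res g p < b := EReal.coe_lt_coe_iff.mp hb1
  have hev1 : ∀ᶠ q in 𝓝 p, (b : EReal) < f q := hlsc p _ hb2
  have hev2 : ∀ᶠ q in 𝓝 p, res g q < res g p + (b - (y + res g p)) := by
    have := (res_cont (K := K) g).continuousAt (x := p)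
    exact this.eventually_lt_const (by linarith)
  filter_upwards [hev1, hev2] with q hq1 hq2
  have hlt : y < b - res g q := by linarith
  calc (y : EReal) < ((b - res g q : ℝ) : EReal) := EReal.coe_lt_coe_iff.mpr hlt
    _ = (b : EReal) - ((res g q : ℝ) : EReal) := EReal.coe_sub _ _
    _ ≤ f q - ((res g q : ℝ) : EReal) := EReal.sub_le_sub hq1.le le_rfl
    _ = hh f g q := rfl

lemma exists_min (hcomp : IsCompact K) {f : K → EReal} (hproper : ∃ p, f p ≠ ⊤)
    (hreal : ∀ p, f p ≠ ⊥) (hlsc : LowerSemicontinuous f) (g : E →L[ℝ] ℝ) :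
    ∃ p₀ : K, IsMinPt f g p₀ := by
  haveI : CompactSpace K := isCompact_iff_compactSpace.mp hcomp
  obtain ⟨pstar, hps⟩ := hproper
  set h := hh f g with hhdef
  set m := ⨅ q, h q with hm
  have hmlt : m < ⊤ := lt_of_le_of_lt (iInf_le _ pstar) (hh_lt_top hps g)
  haveI : Nonempty {y : EReal // m < y} := ⟨⟨⊤, hmlt⟩⟩
  set t : {y : EReal // m < y} → Set K := fun y => {p | h p ≤ y.1} with ht
  have hdir : Directed (· ⊇ ·) t := by
    intro y z
    refine ⟨⟨min y.1 z.1, lt_min y.2 z.2⟩,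
      fun p (hp : h p ≤ min y.1 z.1) => ?_, fun p (hp : h p ≤ min y.1 z.1) => ?_⟩
    · exact (le_trans hp (min_le_left _ _) : h p ≤ y.1)
    · exact (le_trans hp (min_le_right _ _) : h p ≤ z.1)
  have htn : ∀ y, (t y).Nonempty := by
    rintro ⟨y, hy⟩
    obtain ⟨q, hq⟩ := iInf_lt_iff.mp hy
    exact ⟨q, hq.le⟩
  have htcl : ∀ y, IsClosed (t y) := fun y =>
    (hh_lsc hreal hlsc g).isClosed_preimage y.1
  obtain ⟨p₀, hp₀⟩ := IsCompact.nonempty_iInter_of_directed_nonempty_isCompact_isClosed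
    t hdir htn (fun y => (htcl y).isCompact) htcl
  refine ⟨p₀, fun q => ?_⟩
  have hle : h p₀ ≤ m := by
    refine le_of_forall_gt_imp_ge_of_dense fun y hy => ?_
    exact (Set.mem_iInter.mp hp₀ ⟨y, hy⟩ : h p₀ ≤ y)
  exact hle.trans (iInf_le _ q)

lemma min_real {f : K → EReal} (hproper : ∃ p, f p ≠ ⊤) (hreal : ∀ p, f p ≠ ⊥)
    {g : E →L[ℝ] ℝ} {p : K} (hp : IsMinPt f g p) : ∃ a : ℝ, f p = (a : EReal) := by
  obtain ⟨pstar, hps⟩ := hproper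
  have hlt : hh f g p < ⊤ := lt_of_le_of_lt (hp pstar) (hh_lt_top hps g)
  have hne : f p ≠ ⊤ := by
    intro htop
    rw [hh, htop, EReal.top_sub_coe] at hlt
    exact (lt_irrefl _ hlt)
  exact ⟨(f p).toReal, (EReal.coe_toReal hne (hreal p)).symm⟩

lemma cross {f : K → EReal} (hproper : ∃ p, f p ≠ ⊤) (hreal : ∀ p, f p ≠ ⊥)
    {g x : E →L[ℝ] ℝ} {t s : ℝ} (hts : t < s) {p q : K}
    (hp : IsMinPt f (g + t • x) p) (hq : IsMinPt f (g + s • x) q) :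
    res x p ≤ res x q := by
  obtain ⟨a, ha⟩ := min_real hproper hreal hp
  obtain ⟨b, hb⟩ := min_real hproper hreal hq
  have h1 := hp q
  have h2 := hq p
  rw [hh_real ha, hh_real hb, EReal.coe_le_coe_iff] at h1 h2
  rw [res_add, res_add] at h1 h2
  by_contra hcon
  push_neg at hcon
  nlinarith [h1, h2, mul_pos (sub_pos.mpr hts) (sub_pos.mpr hcon)]

lemma perturb (hcomp : IsCompact K) {f : K → EReal} (hproper : ∃ p, f p ≠ ⊤)
    (hreal : ∀ p, f p ≠ ⊥) (hlsc : LowerSemicontinuous f)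
    (g x : E →L[ℝ] ℝ) {δ : ℝ} (hδ : 0 < δ) :
    ∃ t : ℝ, 0 < t ∧ t < δ ∧ ∀ p q : K,
      IsMinPt f (g + t • x) p → IsMinPt f (g + t • x) q → res x p = res x q := by
  classical
  set S : Set ℝ := {t | t ∈ Set.Ioo (0:ℝ) δ ∧ ∃ p q : K,
    IsMinPt f (g + t • x) p ∧ IsMinPt f (g + t • x) q ∧ res x p < res x q} with hS
  have hwit : ∀ t : S, ∃ r : ℚ, ∃ p q : K,
      IsMinPt f (g + (t : ℝ) • x) p ∧ IsMinPt f (g + (t : ℝ) • x) q ∧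
      res x p < (r : ℝ) ∧ (r : ℝ) < res x q := by
    rintro ⟨t, -, p, q, hp, hq, hlt⟩
    obtain ⟨r, hr1, hr2⟩ := exists_rat_btwn hlt
    exact ⟨r, p, q, hp, hq, hr1, hr2⟩
  choose φ P using hwit
  have hmono : ∀ t s : S, (t : ℝ) < (s : ℝ) → φ t < φ s := by
    intro t s hts
    obtain ⟨pt, qt, hpt, hqt, h1t, h2t⟩ := P t
    obtain ⟨ps, qs, hps, hqs, h1s, h2s⟩ := P s
    have hcr : res x qt ≤ res x ps := cross hproper hreal hts hqt hps
    have : (φ t : ℝ) < (φ s : ℝ) := by linarith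
    exact_mod_cast this
  have hinj : Function.Injective φ := by
    intro t s hts
    by_contra hne
    rcases lt_trichotomy (t : ℝ) (s : ℝ) with h | h | h
    · exact absurd hts (hmono t s h).ne
    · exact hne (Subtype.ext h)
    · exact absurd hts.symm (hmono s t h).ne
  have hScount : S.Countable := by
    haveI : Countable S := hinj.countable
    exact Set.countable_coe_iff.mp inferInstance
  have hnotsub : ¬ Set.Ioo (0:ℝ) δ ⊆ S := by
    intro hsub
    have h1 : MeasureTheory.volume (Set.Ioo (0:ℝ) δ) = 0 :=
      le_antisymm (le_trans (MeasureTheory.measure_mono hsub) (hScount.measure_zero _).le)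
       (zero_le)
    rw [Real.volume_Ioo] at h1
    simp only [sub_zero] at h1
    exact absurd h1 (ENNReal.ofReal_pos.mpr hδ).ne'
  obtain ⟨t, ht, htS⟩ := Set.not_subset.mp hnotsub
  refine ⟨t, ht.1, ht.2, fun p q hp hq => ?_⟩
  by_contra hne
  rcases lt_or_gt_of_ne hne with h | h
  · exact htS ⟨ht, p, q, hp, hq, h⟩
  · exact htS ⟨ht, q, p, hq, hp, h⟩

lemma res_sub (g x : E →L[ℝ] ℝ) (p : K) : res (g - x) p = res g p - res x p := rfl

lemma res_tendsto (hcomp : IsCompact K) {g : ℕ → E →L[ℝ] ℝ} {G : E →L[ℝ] ℝ}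
    (hg : Tendsto g atTop (𝓝 G)) {p : ℕ → K} {P : K} (hp : Tendsto p atTop (𝓝 P)) :
    Tendsto (fun j => res (g j) (p j)) atTop (𝓝 (res G P)) := by
  obtain ⟨R, hR0, hR⟩ := bound hcomp
  have h1 : Tendsto (fun j => res G (p j)) atTop (𝓝 (res G P)) :=
    ((res_cont G).tendsto P).comp hp
  have h2 : Tendsto (fun j => res (g j) (p j) - res G (p j)) atTop (𝓝 0) := by
    have hn : Tendsto (fun j => R * ‖g j - G‖) atTop (𝓝 0) := by
      have h3 : Tendsto (fun j => ‖g j - G‖) atTop (𝓝 0) :=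
        tendsto_iff_norm_sub_tendsto_zero.mp hg
      simpa using h3.const_mul R
    refine squeeze_zero_norm (fun j => ?_) hn
    rw [Real.norm_eq_abs, ← res_sub]
    exact hR _ _
  have := h2.add h1
  simpa using this

lemma min_limit (hcomp : IsCompact K) {f : K → EReal} (hproper : ∃ p, f p ≠ ⊤)
    (hreal : ∀ p, f p ≠ ⊥) (hlsc : LowerSemicontinuous f)
    {g : ℕ → E →L[ℝ] ℝ} {G : E →L[ℝ] ℝ} (hg : Tendsto g atTop (𝓝 G))
    {p : ℕ → K} {P : K} (hp : Tendsto p atTop (𝓝 P))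
    (hmin : ∀ j, IsMinPt f (g j) (p j)) : IsMinPt f G P := by
  intro r
  rcases eq_or_ne (f r) ⊤ with htop | hne
  · have h5 : hh f G r = ⊤ := by rw [hh, htop, EReal.top_sub_coe]
    rw [h5]; exact le_top
  have hb : f r = ((f r).toReal : EReal) := (EReal.coe_toReal hne (hreal r)).symm
  set b := (f r).toReal with hbdef
  by_contra hcon
  push_neg at hcon
  rw [hh_real hb] at hcon
  set c := b - res G r with hcdef
  have hfP : (↑(c + res G P) : EReal) < f P := by
    rw [EReal.coe_add]
    exact (EReal.lt_sub_iff_add_lt (Or.inr (EReal.coe_ne_top _))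
      (Or.inr (EReal.coe_ne_bot _))).mp hcon
  obtain ⟨β, hβ1, hβ2⟩ := EReal.lt_iff_exists_real_btwn.mp hfP
  have hβ1' : c + res G P < β := EReal.coe_lt_coe_iff.mp hβ1
  have hev1 : ∀ᶠ j in atTop, (β : EReal) < f (p j) := hp.eventually (hlsc P _ hβ2)
  have hres : Tendsto (fun j => res (g j) (p j)) atTop (𝓝 (res G P)) :=
    res_tendsto hcomp hg hp
  set ε := β - (c + res G P) with hεdef
  have hε : 0 < ε := by linarith
  have hev2 : ∀ᶠ j in atTop, res (g j) (p j) < res G P + ε / 2 :=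
    hres.eventually_lt_const (by linarith)
  have hcj : Tendsto (fun j => b - res (g j) r) atTop (𝓝 c) := by
    have h4 : Tendsto (fun j => res (g j) r) atTop (𝓝 (res G r)) :=
      res_tendsto hcomp hg tendsto_const_nhds
    exact tendsto_const_nhds.sub h4
  have hev3 : ∀ᶠ j in atTop, b - res (g j) r < c + ε / 2 :=
    hcj.eventually_lt_const (by linarith)
  obtain ⟨j, hj1, hj2, hj3⟩ := (hev1.and (hev2.and hev3)).exists
  have hle := hmin j r
  have hhr : hh f (g j) r = ((b - res (g j) r : ℝ) : EReal) := hh_real hb _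
  have hchain : ((β - res (g j) (p j) : ℝ) : EReal) ≤ ((b - res (g j) r : ℝ) : EReal) := by
    calc ((β - res (g j) (p j) : ℝ) : EReal)
        = (β : EReal) - ((res (g j) (p j) : ℝ) : EReal) := EReal.coe_sub _ _
      _ ≤ f (p j) - ((res (g j) (p j) : ℝ) : EReal) := EReal.sub_le_sub hj1.le le_rfl
      _ = hh f (g j) (p j) := rfl
      _ ≤ hh f (g j) r := hle
      _ = _ := hhr
  have hfin := EReal.coe_le_coe_iff.mp hchain
  obtain ⟨hj2', hj3'⟩ := hj2, hj3
  linarith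

def A (f : K → EReal) (x : E →L[ℝ] ℝ) (n : ℕ) : Set (E →L[ℝ] ℝ) :=
  {g | ∃ p q : K, IsMinPt f g p ∧ IsMinPt f g q ∧ 1 / (n + 1 : ℝ) ≤ |res x p - res x q|}

lemma A_closed (hcomp : IsCompact K) (hmetr : TopologicalSpace.MetrizableSpace K)
    {f : K → EReal} (hproper : ∃ p, f p ≠ ⊤) (hreal : ∀ p, f p ≠ ⊥)
    (hlsc : LowerSemicontinuous f) (x : E →L[ℝ] ℝ) (n : ℕ) :
    IsClosed (A f x n) := by
  haveI : CompactSpace K := isCompact_iff_compactSpace.mp hcomp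
  refine isClosed_of_closure_subset fun G hG => ?_
  obtain ⟨g, hgA, hgG⟩ := mem_closure_iff_seq_limit.mp hG
  choose p q hp hq hd using hgA
  obtain ⟨P, φ, hφ, hps⟩ := CompactSpace.tendsto_subseq p
  obtain ⟨Q, ψ, hψ, hqs⟩ := CompactSpace.tendsto_subseq (q ∘ φ)
  have hp' : Tendsto (fun j => p (φ (ψ j))) atTop (𝓝 P) :=
    hps.comp hψ.tendsto_atTop
  have hq' : Tendsto (fun j => q (φ (ψ j))) atTop (𝓝 Q) := hqs
  have hg' : Tendsto (fun j => g (φ (ψ j))) atTop (𝓝 G) :=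
    hgG.comp (hφ.comp hψ).tendsto_atTop
  refine ⟨P, Q, min_limit hcomp hproper hreal hlsc hg' hp' (fun j => hp _),
    min_limit hcomp hproper hreal hlsc hg' hq' (fun j => hq _), ?_⟩
  have htend : Tendsto (fun j => |res x (p (φ (ψ j))) - res x (q (φ (ψ j)))|)
      atTop (𝓝 |res x P - res x Q|) :=
    ((((res_cont x).tendsto P).comp hp').sub (((res_cont x).tendsto Q).comp hq')).abs
  exact ge_of_tendsto htend (Eventually.of_forall fun j => hd _)

lemma A_int_empty (hcomp : IsCompact K) {f : K → EReal} (hproper : ∃ p, f p ≠ ⊤)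
    (hreal : ∀ p, f p ≠ ⊥) (hlsc : LowerSemicontinuous f) (x : E →L[ℝ] ℝ) (n : ℕ) :
    interior (A f x n) = ∅ := by
  rw [Set.eq_empty_iff_forall_notMem]
  intro G hG
  obtain ⟨ε, hε, hball⟩ := Metric.mem_nhds_iff.mp (mem_interior_iff_mem_nhds.mp hG)
  have hδ : 0 < ε / (‖x‖ + 1) := by positivity
  obtain ⟨t, ht0, htδ, hconst⟩ := perturb hcomp hproper hreal hlsc G x hδ
  have hmem : G + t • x ∈ Metric.ball G ε := by
    rw [Metric.mem_ball, dist_eq_norm]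
    have h1 : ‖G + t • x - G‖ = t * ‖x‖ := by
      rw [add_sub_cancel_left]
      exact (norm_smul t x).trans (by rw [Real.norm_eq_abs, abs_of_pos ht0])
    rw [h1]
    have h2 : t * ‖x‖ ≤ t * (‖x‖ + 1) := by nlinarith [norm_nonneg x]
    have h3 : t * (‖x‖ + 1) < ε := by
      rw [← lt_div_iff₀ (by positivity)]
      exact htδ
    linarith
  obtain ⟨p, q, hp, hq, hd⟩ := hball hmem
  rw [hconst p q hp hq] at hd
  simp only [sub_self, abs_zero] at hd
  have : (0:ℝ) < 1 / (n + 1) := by positivity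
  linarith

lemma sep_family (hcomp : IsCompact K) (hmetr : TopologicalSpace.MetrizableSpace K) :
    ∃ T : Set (E →L[ℝ] ℝ), T.Countable ∧
      ∀ p q : K, p ≠ q → ∃ x ∈ T, res x p ≠ res x q := by
  classical
  haveI : CompactSpace K := isCompact_iff_compactSpace.mp hcomp
  letI : MetricSpace K := TopologicalSpace.metrizableSpaceMetric K
  have hsep : ∀ p q : K, p ≠ q → ∃ x : E →L[ℝ] ℝ, res x p ≠ res x q := by
    intro p q hpq
    have hvne : (toWeakSpace ℝ E).symm (p : WeakSpace ℝ E)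
        - (toWeakSpace ℝ E).symm (q : WeakSpace ℝ E) ≠ 0 := by
      intro h0
      apply hpq
      apply Subtype.ext
      have := sub_eq_zero.mp h0
      exact (toWeakSpace ℝ E).symm.injective this
    obtain ⟨x, -, hx⟩ := exists_dual_vector ℝ _ (norm_ne_zero_iff.mpr hvne)
    refine ⟨x, fun hc => ?_⟩
    rw [map_sub] at hx
    have hx' : x ((toWeakSpace ℝ E).symm (p : WeakSpace ℝ E))
        - x ((toWeakSpace ℝ E).symm (q : WeakSpace ℝ E)) = ‖(toWeakSpace ℝ E).symm (p : WeakSpace ℝ E)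
        - (toWeakSpace ℝ E).symm (q : WeakSpace ℝ E)‖ := by exact_mod_cast hx
    have hres : res x p - res x q = ‖(toWeakSpace ℝ E).symm (p : WeakSpace ℝ E)
        - (toWeakSpace ℝ E).symm (q : WeakSpace ℝ E)‖ := by
      rw [← hx']
      rfl
    rw [hc, sub_self] at hres
    exact hvne (by rw [← norm_eq_zero, ← hres])
  have hcov : ∀ m : ℕ, ∃ F : Finset (E →L[ℝ] ℝ),
      ∀ z : K × K, 1 / (m + 1 : ℝ) ≤ dist z.1 z.2 → ∃ x ∈ F, res x z.1 ≠ res x z.2 := by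
    intro m
    set C : Set (K × K) := {z | 1 / (m + 1 : ℝ) ≤ dist z.1 z.2} with hC
    have hCcl : IsClosed C := isClosed_le continuous_const (continuous_dist.comp
      (continuous_fst.prodMk continuous_snd))
    have hCc : IsCompact C := hCcl.isCompact
    set U : (E →L[ℝ] ℝ) → Set (K × K) := fun x => {z | res x z.1 ≠ res x z.2} with hU
    have hUo : ∀ x, IsOpen (U x) := fun x =>
      isOpen_ne_fun ((res_cont x).comp continuous_fst) ((res_cont x).comp continuous_snd)
    have hCU : C ⊆ ⋃ x, U x := by
      rintro ⟨p, q⟩ hz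
      have hpq : p ≠ q := by
        rintro rfl
        have h0 : (1 : ℝ) / (m + 1) ≤ 0 := by simpa [hC] using hz
        have h1 : (0:ℝ) < 1 / (m + 1) := by positivity
        linarith
      obtain ⟨x, hx⟩ := hsep p q hpq
      exact Set.mem_iUnion.mpr ⟨x, hx⟩
    obtain ⟨F, hF⟩ := hCc.elim_finite_subcover U hUo hCU
    refine ⟨F, fun z hz => ?_⟩
    have := hF hz
    simpa only [Set.mem_iUnion, exists_prop, hU, Set.mem_setOf_eq] using this
  choose F hF using hcov
  refine ⟨⋃ m, (F m : Set (E →L[ℝ] ℝ)), Set.countable_iUnion fun m => (F m).countable_toSet,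
    fun p q hpq => ?_⟩
  have hdpos : 0 < dist p q := dist_pos.mpr hpq
  obtain ⟨m, hm⟩ := exists_nat_one_div_lt hdpos
  obtain ⟨x, hxF, hxne⟩ := hF m (p, q) (by exact_mod_cast hm.le)
  exact ⟨x, Set.mem_iUnion.mpr ⟨m, hxF⟩, hxne⟩

lemma nd_meagre {X : Type*} [TopologicalSpace X] {s : Set X} (h : IsNowhereDense s) :
    IsMeagre s :=
  isMeagre_iff_countable_union_isNowhereDense.mpr
    ⟨{s}, by simpa using h, Set.countable_singleton s, by simp⟩

end Stmt5Aux

/-- **Linear variational principle for weakly compact sets.** Let `E` be a real Banach space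
and `K` a weakly compact, weakly metrizable subset of `E`. Let `f : K → ℝ ∪ {+∞}` be proper
and lower semicontinuous (for the weak topology). Then the set of `x* ∈ E*` such that
`x ↦ f(x) - x*(x)` does not attain a strict minimum on `K` is meagre in `E*`. -/
theorem stmt_5 {E : Type*} [NormedAddCommGroup E] [NormedSpace ℝ E] [CompleteSpace E]
    (K : Set (WeakSpace ℝ E)) (hcomp : IsCompact K)
    (hmetr : TopologicalSpace.MetrizableSpace K)
    (f : K → EReal) (hproper : ∃ p, f p ≠ ⊤) (hreal : ∀ p, f p ≠ ⊥)
    (hlsc : LowerSemicontinuous f) :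
    IsMeagre {g : E →L[ℝ] ℝ | ¬ ∃ p₀ : K, ∀ p : K, p ≠ p₀ →
      f p₀ - (g (p₀ : WeakSpace ℝ E) : ℝ) < f p - (g (p : WeakSpace ℝ E) : ℝ)} := by
  classical
  obtain ⟨T, hTc, hTsep⟩ := sep_family hcomp hmetr
  obtain ⟨e, he⟩ := (hTc.insert (0 : E →L[ℝ] ℝ)).exists_eq_range
    ⟨0, Set.mem_insert _ _⟩
  have hmeagre : IsMeagre (⋃ (k : ℕ) (n : ℕ), A f (e k) n) := by
    refine isMeagre_iUnion fun k => isMeagre_iUnion fun n => nd_meagre ?_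
    rw [(A_closed hcomp hmetr hproper hreal hlsc (e k) n).isNowhereDense_iff]
    exact A_int_empty hcomp hproper hreal hlsc (e k) n
  refine hmeagre.mono ?_
  intro g hg
  rw [Set.mem_setOf_eq] at hg
  push_neg at hg
  obtain ⟨p₀, hp₀⟩ := exists_min hcomp hproper hreal hlsc g
  obtain ⟨p, hpne, hple⟩ := hg p₀
  have hple' : hh f g p ≤ hh f g p₀ := hple
  have hpmin : IsMinPt f g p := fun r => hple'.trans (hp₀ r)
  obtain ⟨x, hxT, hxne⟩ := hTsep p p₀ hpne
  have hxmem : x ∈ Set.range e := he ▸ Set.mem_insert_of_mem _ hxT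
  obtain ⟨k, rfl⟩ := hxmem
  have habs : 0 < |res (e k) p - res (e k) p₀| := abs_pos.mpr (sub_ne_zero.mpr hxne)
  obtain ⟨n, hn⟩ := exists_nat_one_div_lt habs
  refine Set.mem_iUnion.mpr ⟨k, Set.mem_iUnion.mpr ⟨n, p, p₀, hpmin, hp₀, ?_⟩⟩
  exact_mod_cast hn.le
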